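/- Fix p ≥ 1 and D ≥ 1. If a compact metric space S embeds with distortion D into some ultrametric space, then S embeds with distortion D into ℓ_p. -/

import Mathlib

open ENNReal Filter

private lemma csSup_mem_of_finite_above' {E : Set ℝ} (hne : E.Nonempty)
    (hfin : ∀ ε > 0, (E ∩ Set.Ici ε).Finite) (hpos : ∀ e ∈ E, 0 < e)
    (hbdd : BddAbove E) : sSup E ∈ E := by
  obtain ⟨e₀, he₀⟩ := hne
  have he₀pos := hpos e₀ he₀
  set F := E ∩ Set.Ici e₀ with hF
  have hFfin : F.Finite := hfin e₀ he₀pos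
  have hFne : F.Nonempty := ⟨e₀, he₀, le_refl e₀⟩
  have hsub : F ⊆ E := Set.inter_subset_left
  have h1 : sSup F ∈ F := hFne.csSup_mem hFfin
  have heq : sSup E = sSup F := by
    apply le_antisymm
    · apply csSup_le ⟨e₀, he₀⟩
      intro e he
      rcases le_or_gt e₀ e with h | h
      · exact le_csSup hFfin.bddAbove ⟨he, Set.mem_Ici.mpr h⟩
      · exact h.le.trans (le_csSup hFfin.bddAbove ⟨he₀, Set.mem_Ici.mpr (le_refl _)⟩)
    · exact csSup_le_csSup hbdd hFne hsub
  rw [heq]; exact hsub h1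

private lemma exists_decreasing_enum {E : Set ℝ} (hpos : ∀ e ∈ E, 0 < e)
    (hfin : ∀ ε > 0, (E ∩ Set.Ici ε).Finite)
    (hsmall : ∀ ε > 0, ∃ e ∈ E, e < ε)
    (hbdd : BddAbove E) :
    ∃ t : ℕ → ℝ, StrictAnti t ∧ (∀ k, 0 < t k) ∧
      Tendsto t atTop (nhds 0) ∧ E ⊆ Set.range t := by
  have hne : E.Nonempty := by obtain ⟨e, he, _⟩ := hsmall 1 one_pos; exact ⟨e, he⟩
  have key : ∀ a, 0 < a → sSup (E ∩ Set.Iio a) ∈ E ∩ Set.Iio a := by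
    intro a ha
    apply csSup_mem_of_finite_above'
    · obtain ⟨e, heE, he⟩ := hsmall a ha; exact ⟨e, heE, he⟩
    · intro ε hε; exact (hfin ε hε).subset fun x hx => ⟨hx.1.1, hx.2⟩
    · intro e he; exact hpos e he.1
    · exact hbdd.mono Set.inter_subset_left
  set t : ℕ → ℝ := fun k => Nat.rec (sSup E) (fun _ prev => sSup (E ∩ Set.Iio prev)) k with ht
  have ht0 : t 0 = sSup E := rfl
  have hts : ∀ k, t (k + 1) = sSup (E ∩ Set.Iio (t k)) := fun k => rfl
  have hmem : ∀ k, t k ∈ E := by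
    intro k
    induction k with
    | zero => exact ht0 ▸ csSup_mem_of_finite_above' hne hfin hpos hbdd
    | succ k ih => exact (hts k ▸ key (t k) (hpos _ ih)).1
  have hstep : ∀ k, t (k + 1) < t k := by
    intro k
    exact (hts k ▸ key (t k) (hpos _ (hmem k))).2
  have hanti : StrictAnti t := strictAnti_nat_of_succ_lt hstep
  have htpos : ∀ k, 0 < t k := fun k => hpos _ (hmem k)
  have not_all_ge : ∀ ε, 0 < ε → ¬ (∀ k, ε ≤ t k) := by
    intro ε hε hall
    have hfin2 : (Set.range t).Finite :=
      (hfin ε hε).subset (by rintro x ⟨k, rfl⟩; exact ⟨hmem k, hall k⟩)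
    exact Set.infinite_range_of_injective hanti.injective hfin2
  constructor
  case h =>
    refine ⟨hanti, htpos, ?_, ?_⟩
    · rw [Metric.tendsto_atTop]
      intro ε hε
      have h1 : ¬ (∀ k, ε ≤ t k) := not_all_ge ε hε
      push_neg at h1
      obtain ⟨N, hN⟩ := h1
      refine ⟨N, fun n hn => ?_⟩
      rw [Real.dist_eq, sub_zero, abs_of_pos (htpos n)]
      exact lt_of_le_of_lt (hanti.antitone hn) hN
    · intro e he
      by_contra hne'
      have hne2 : ∀ k, t k ≠ e := fun k hk => hne' ⟨k, hk⟩
      have hgt : ∀ k, e < t k := by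
        intro k
        induction k with
        | zero => exact lt_of_le_of_ne (le_csSup hbdd he) fun h => hne2 0 h.symm
        | succ k ih =>
          have h2 : e ≤ t (k + 1) := by
            rw [hts k]
            exact le_csSup (hbdd.mono Set.inter_subset_left) ⟨he, ih⟩
          exact lt_of_le_of_ne h2 fun h => hne2 (k + 1) h.symm
      exact not_all_ge e (hpos e he) fun k => (hgt k).le

private lemma ultra_dist_eq' {U : Type*} [MetricSpace U] [IsUltrametricDist U]
    {a a' b b' : U} (ha : dist a a' < dist a b) (hb : dist b b' < dist a b) :
    dist a' b' = dist a b := by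
  refine le_antisymm ?_ ?_
  · calc dist a' b' ≤ max (dist a' a) (dist a b') := IsUltrametricDist.dist_triangle_max _ _ _
      _ ≤ max (dist a' a) (max (dist a b) (dist b b')) :=
        max_le_max (le_refl _) (IsUltrametricDist.dist_triangle_max _ _ _)
      _ ≤ dist a b := by
        rw [dist_comm a' a]
        exact max_le ha.le (max_le (le_refl _) hb.le)
  · by_contra hlt
    push_neg at hlt
    have h1 : dist a b ≤ max (dist a a') (max (dist a' b') (dist b' b)) :=
      le_trans (IsUltrametricDist.dist_triangle_max a a' b)
        (max_le_max (le_refl _) (IsUltrametricDist.dist_triangle_max _ _ _))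
    have h2 : max (dist a a') (max (dist a' b') (dist b' b)) < dist a b := by
      rw [dist_comm b' b]
      exact max_lt ha (max_lt hlt hb)
    exact absurd (lt_of_le_of_lt h1 h2) (lt_irrefl _)

/-- For `p ≥ 1` and `D ≥ 1`: if a compact metric space `S` embeds with distortion `D`
into some ultrametric space, then `S` embeds with distortion `D` into `ℓ_p`. -/
theorem embeds_distortion_ultrametric_implies_embeds_distortion_lp
    (p : ℝ) (hp : 1 ≤ p) (D : ℝ) (hD : 1 ≤ D)
    (S : Type*) [MetricSpace S] [CompactSpace S]
    (h : ∃ (U : Type) (_ : MetricSpace U) (_ : IsUltrametricDist U)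
      (f : S → U) (r : ℝ), 0 < r ∧ ∀ x y : S,
        r * dist x y ≤ dist (f x) (f y) ∧ dist (f x) (f y) ≤ D * r * dist x y) :
    haveI : Fact ((1 : ℝ≥0∞) ≤ ENNReal.ofReal p) := ⟨ENNReal.one_le_ofReal.mpr hp⟩
    ∃ (f : S → lp (fun _ : ℕ => ℝ) (ENNReal.ofReal p)) (r : ℝ), 0 < r ∧
      ∀ x y : S,
        r * dist x y ≤ dist (f x) (f y) ∧ dist (f x) (f y) ≤ D * r * dist x y := by
  classical
  haveI : Fact ((1 : ℝ≥0∞) ≤ ENNReal.ofReal p) := ⟨ENNReal.one_le_ofReal.mpr hp⟩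
  obtain ⟨U, _, _, f, r, hr, hf⟩ := h
  have hp0 : (0 : ℝ) < p := lt_of_lt_of_le one_pos hp
  have hpt : (ENNReal.ofReal p).toReal = p := ENNReal.toReal_ofReal hp0.le
  have hppos : 0 < (ENNReal.ofReal p).toReal := by rw [hpt]; exact hp0
  cases isEmpty_or_nonempty S with
  | inl hS => exact ⟨fun x => isEmptyElim x, 1, one_pos, fun x => isEmptyElim x⟩
  | inr hS =>
  have hDr : (0 : ℝ) < D * r := mul_pos (lt_of_lt_of_le one_pos hD) hr
  -- separability and a dense sequence
  haveI : TopologicalSpace.SeparableSpace S := by infer_instance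
  set Z : ℕ → S := TopologicalSpace.denseSeq S with hZdef
  have hZ : DenseRange Z := TopologicalSpace.denseRange_denseSeq S
  -- the set of positive distance values, together with powers of 1/2
  set Dset : Set ℝ := Set.range (fun q : S × S => dist (f q.1) (f q.2)) with hDset
  have hDfin : ∀ ε > 0, (Dset ∩ Set.Ici ε).Finite := by
    intro ε hε
    set δ : ℝ := ε / (2 * (D * r)) with hδdef
    have hδ : 0 < δ := div_pos hε (by positivity)
    have hDrδ : D * r * δ < ε := by
      rw [hδdef]
      rw [div_eq_inv_mul, ← mul_assoc]
      have : D * r * (2 * (D * r))⁻¹ = 2⁻¹ := by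
        field_simp
      rw [this]
      linarith
    obtain ⟨C, hC⟩ := isCompact_univ.elim_finite_subcover
      (fun c : S => Metric.ball c δ) (fun c => Metric.isOpen_ball)
      (fun x _ => Set.mem_iUnion.mpr ⟨x, Metric.mem_ball_self hδ⟩)
    apply Set.Finite.subset (((C ×ˢ C).finite_toSet).image
      (fun q : S × S => dist (f q.1) (f q.2)))
    rintro d ⟨⟨⟨x, y⟩, rfl⟩, hd⟩
    simp only [Set.mem_Ici] at hd
    obtain ⟨c, hcC, hxc⟩ : ∃ c ∈ C, x ∈ Metric.ball c δ := by
      have := hC (Set.mem_univ x); simpa using this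
    obtain ⟨c', hc'C, hyc⟩ : ∃ c' ∈ C, y ∈ Metric.ball c' δ := by
      have := hC (Set.mem_univ y); simpa using this
    have h1 : dist (f x) (f c) < dist (f x) (f y) := by
      have := (hf x c).2
      have h3 : dist x c < δ := Metric.mem_ball.mp hxc
      have : dist (f x) (f c) ≤ D * r * δ :=
        le_trans this (by nlinarith)
      exact lt_of_le_of_lt this (lt_of_lt_of_le hDrδ hd)
    have h2 : dist (f y) (f c') < dist (f x) (f y) := by
      have := (hf y c').2
      have h3 : dist y c' < δ := Metric.mem_ball.mp hyc
      have : dist (f y) (f c') ≤ D * r * δ :=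
        le_trans this (by nlinarith)
      exact lt_of_le_of_lt this (lt_of_lt_of_le hDrδ hd)
    have := ultra_dist_eq' h1 h2
    exact ⟨(c, c'), by simpa using ⟨hcC, hc'C⟩, this⟩
  set E : Set ℝ := (Dset ∩ Set.Ioi 0) ∪ Set.range (fun n : ℕ => (2 : ℝ)⁻¹ ^ n) with hE
  have hhalf : ∀ n : ℕ, (0:ℝ) < 2⁻¹ ^ n := fun n => pow_pos (by norm_num) n
  have hEpos : ∀ e ∈ E, 0 < e := by
    rintro e (⟨_, he⟩ | ⟨n, rfl⟩)
    · exact he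
    · exact hhalf n
  have hpowfin : ∀ ε > 0, (Set.range (fun n : ℕ => (2 : ℝ)⁻¹ ^ n) ∩ Set.Ici ε).Finite := by
    intro ε hε
    obtain ⟨N, hN⟩ := exists_pow_lt_of_lt_one hε (by norm_num : (2:ℝ)⁻¹ < 1)
    apply Set.Finite.subset ((Set.finite_Iio N).image (fun n : ℕ => (2 : ℝ)⁻¹ ^ n))
    rintro x ⟨⟨n, rfl⟩, hx⟩
    simp only [Set.mem_Ici] at hx
    refine ⟨n, ?_, rfl⟩
    simp only [Set.mem_Iio]
    by_contra hn
    push_neg at hn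
    have : (2:ℝ)⁻¹ ^ n ≤ 2⁻¹ ^ N :=
      pow_le_pow_of_le_one (by norm_num) (by norm_num) hn
    linarith
  have hEfin : ∀ ε > 0, (E ∩ Set.Ici ε).Finite := by
    intro ε hε
    rw [hE, Set.union_inter_distrib_right]
    exact ((hDfin ε hε).subset (by intro x hx; exact ⟨hx.1.1, hx.2⟩)).union (hpowfin ε hε)
  have hEsmall : ∀ ε > 0, ∃ e ∈ E, e < ε := by
    intro ε hε
    obtain ⟨N, hN⟩ := exists_pow_lt_of_lt_one hε (by norm_num : (2:ℝ)⁻¹ < 1)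
    exact ⟨2⁻¹ ^ N, Or.inr ⟨N, rfl⟩, hN⟩
  have hEbdd : BddAbove E := by
    apply BddAbove.union
    · apply BddAbove.mono (show Dset ∩ Set.Ioi 0 ⊆ (Dset ∩ Set.Ici 1) ∪ Set.Iio 1 by
        intro x hx
        rcases lt_or_ge x 1 with h | h
        · exact Or.inr h
        · exact Or.inl ⟨hx.1, h⟩)
      exact ((hDfin 1 one_pos).bddAbove).union bddAbove_Iio
    · exact ⟨1, by rintro x ⟨n, rfl⟩; exact pow_le_one₀ (by norm_num) (by norm_num)⟩
  obtain ⟨t, htanti, htpos, htend, htrange⟩ :=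
    exists_decreasing_enum hEpos hEfin hEsmall hEbdd
  -- the ball-name functions
  have exn : ∀ (k : ℕ) (x : S), ∃ n, dist (f (Z n)) (f x) < t k := by
    intro k x
    obtain ⟨n, hn⟩ := Metric.denseRange_iff.mp hZ x (t k / (D * r)) (div_pos (htpos k) hDr)
    refine ⟨n, ?_⟩
    have h1 := (hf (Z n) x).2
    have h2 : dist (Z n) x < t k / (D * r) := by rwa [dist_comm]
    calc dist (f (Z n)) (f x) ≤ D * r * dist (Z n) x := h1
      _ < D * r * (t k / (D * r)) := by
          exact (mul_lt_mul_iff_right₀ hDr).mpr h2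
      _ = t k := by field_simp
  set σ : ℕ → S → ℕ := fun k x => Nat.find (exn k x) with hσdef
  have hσspec : ∀ k x, dist (f (Z (σ k x))) (f x) < t k := fun k x => Nat.find_spec (exn k x)
  have hσ : ∀ k x y, σ k x = σ k y ↔ dist (f x) (f y) < t k := by
    intro k x y
    constructor
    · intro hxy
      have h1 := hσspec k x
      have h2 := hσspec k y
      rw [hxy] at h1
      calc dist (f x) (f y) ≤ max (dist (f x) (f (Z (σ k y)))) (dist (f (Z (σ k y))) (f y)) :=
            IsUltrametricDist.dist_triangle_max _ _ _
        _ < t k := max_lt (by rwa [dist_comm]) h2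
    · intro hxy
      apply le_antisymm
      · apply Nat.find_min'
        calc dist (f (Z (σ k y))) (f x)
            ≤ max (dist (f (Z (σ k y))) (f y)) (dist (f y) (f x)) :=
              IsUltrametricDist.dist_triangle_max _ _ _
          _ < t k := max_lt (hσspec k y) (by rwa [dist_comm])
      · apply Nat.find_min'
        calc dist (f (Z (σ k x))) (f y)
            ≤ max (dist (f (Z (σ k x))) (f x)) (dist (f x) (f y)) :=
              IsUltrametricDist.dist_triangle_max _ _ _
          _ < t k := max_lt (hσspec k x) hxy
  -- coefficients
  set u : ℕ → ℝ := fun k => t k ^ p with hu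
  have hu0 : ∀ k, 0 ≤ u k := fun k => Real.rpow_nonneg (htpos k).le p
  have husucc : ∀ k, u (k + 1) < u k := fun k =>
    Real.rpow_lt_rpow (htpos (k + 1)).le (htanti (Nat.lt_succ_self k)) hp0
  have huT : Tendsto u atTop (nhds 0) := by
    have := htend.rpow_const (p := p) (Or.inr hp0.le)
    rwa [Real.zero_rpow hp0.ne'] at this
  set w : ℕ → ℝ := fun k => (u k - u (k + 1)) / 2 with hw
  have hw0 : ∀ k, 0 ≤ w k := fun k => by
    have := husucc k; simp only [hw]; linarith
  set A : ℕ → ℝ := fun k => w k ^ p⁻¹ with hA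
  have hA0 : ∀ k, 0 ≤ A k := fun k => Real.rpow_nonneg (hw0 k) _
  have hApow : ∀ k, A k ^ p = w k := fun k => Real.rpow_inv_rpow (hw0 k) hp0.ne'
  have hwsum : Summable w := by
    apply summable_of_sum_range_le hw0 (c := u 0 / 2)
    intro n
    have : ∑ i ∈ Finset.range n, w i = (u 0 - u n) / 2 := by
      rw [hw, ← Finset.sum_div, Finset.sum_range_sub' u n]
    rw [this]
    have := hu0 n
    linarith
  -- the embedding
  set G : S → ℕ × ℕ → ℝ := fun x kn => if σ kn.1 x = kn.2 then A kn.1 else 0 with hG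
  have hGnorm : ∀ x (kn : ℕ × ℕ), ‖G x kn‖ ^ p = if σ kn.1 x = kn.2 then w kn.1 else 0 := by
    intro x kn
    by_cases hc : σ kn.1 x = kn.2
    · rw [hG]; simp only [if_pos hc]
      rw [Real.norm_eq_abs, abs_of_nonneg (hA0 _), hApow]
    · rw [hG]; simp only [if_neg hc]
      rw [norm_zero, Real.zero_rpow hp0.ne']
  have hinner_summ : ∀ x k, Summable (fun n => ‖G x (k, n)‖ ^ p) := by
    intro x k
    apply summable_of_ne_finset_zero (s := {σ k x})
    intro n hn
    simp only [Finset.mem_singleton] at hn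
    rw [hGnorm]
    exact if_neg (fun hc => hn hc.symm)
  have hinner_tsum : ∀ x k, (∑' n, ‖G x (k, n)‖ ^ p) = w k := by
    intro x k
    rw [tsum_eq_sum (s := {σ k x}) (by
      intro n hn
      simp only [Finset.mem_singleton] at hn
      rw [hGnorm]
      exact if_neg (fun hc => hn hc.symm))]
    rw [Finset.sum_singleton, hGnorm, if_pos rfl]
  have hsummG : ∀ x, Summable (fun kn : ℕ × ℕ => ‖G x kn‖ ^ p) := by
    intro x
    rw [summable_prod_of_nonneg (fun kn => Real.rpow_nonneg (norm_nonneg _) _)]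
    exact ⟨hinner_summ x, by
      apply Summable.congr hwsum
      intro k
      exact (hinner_tsum x k).symm⟩
  have hmem : ∀ x, Memℓp (fun j => G x (Nat.pairEquiv.symm j)) (ENNReal.ofReal p) := by
    intro x
    apply memℓp_gen
    rw [hpt]
    exact (Nat.pairEquiv.symm.summable_iff
      (f := fun kn : ℕ × ℕ => ‖G x kn‖ ^ p)).mpr (hsummG x)
  set g : S → lp (fun _ : ℕ => ℝ) (ENNReal.ofReal p) :=
    fun x => ⟨fun j => G x (Nat.pairEquiv.symm j), hmem x⟩ with hg
  have hiso : ∀ x y, dist (g x) (g y) = dist (f x) (f y) := by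
    intro x y
    by_cases hxy : dist (f x) (f y) = 0
    · have hgeq : g x = g y := by
        apply Subtype.ext
        funext j
        show G x (Nat.pairEquiv.symm j) = G y (Nat.pairEquiv.symm j)
        have hσeq : ∀ k, σ k x = σ k y := fun k =>
          (hσ k x y).mpr (by rw [hxy]; exact htpos k)
        rw [hG]
        simp only [hσeq]
      rw [hgeq, dist_self, hxy]
    · have hdpos : 0 < dist (f x) (f y) := lt_of_le_of_ne dist_nonneg (Ne.symm hxy)
      obtain ⟨m, hm0⟩ := htrange (Or.inl ⟨⟨(x, y), rfl⟩, hdpos⟩)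
      have hm : t m = dist (f x) (f y) := hm0
      have hsplit : ∀ k, (σ k x = σ k y ↔ k < m) := by
        intro k
        rw [hσ, ← hm]
        exact htanti.lt_iff_gt
      set P : ℕ × ℕ → ℝ := fun kn => ‖G x kn - G y kn‖ ^ p with hP
      have hP0 : ∀ kn, 0 ≤ P kn := fun kn => Real.rpow_nonneg (norm_nonneg _) _
      have hPle : ∀ kn, P kn ≤ ‖G x kn‖ ^ p + ‖G y kn‖ ^ p := by
        rintro ⟨k, n⟩
        by_cases h1 : σ k x = n <;> by_cases h2 : σ k y = n <;>
            simp only [hP, hG, if_pos, if_neg, h1, h2, if_true, if_false, ite_true, ite_false,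
              sub_self, sub_zero, zero_sub, norm_neg, norm_zero,
              Real.zero_rpow hp0.ne'] <;>
          try positivity
        all_goals nlinarith [Real.rpow_nonneg (norm_nonneg (A k)) p, le_refl (‖A k‖ ^ p)]
      have hPsum : Summable P :=
        Summable.of_nonneg_of_le hP0 hPle ((hsummG x).add (hsummG y))
      have hinner : ∀ k, (∑' n, P (k, n)) = if k < m then 0 else u k - u (k + 1) := by
        intro k
        by_cases hk : k < m
        · rw [if_pos hk]
          have hσeq : σ k x = σ k y := (hsplit k).mpr hk
          have hz : ∀ n, P (k, n) = 0 := by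
            intro n
            rw [hP]
            simp only [hG, hσeq, sub_self, norm_zero]
            exact Real.zero_rpow hp0.ne'
          calc (∑' n, P (k, n)) = ∑' _ : ℕ, (0 : ℝ) := tsum_congr hz
            _ = 0 := tsum_zero
        · rw [if_neg hk]
          have hσne : σ k x ≠ σ k y := fun hc => hk ((hsplit k).mp hc)
          rw [tsum_eq_sum (s := {σ k x, σ k y}) (by
            intro n hn
            simp only [Finset.mem_insert, Finset.mem_singleton, not_or] at hn
            rw [hP]
            simp only [hG]
            rw [if_neg (fun hc => hn.1 hc.symm), if_neg (fun hc => hn.2 hc.symm),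
              sub_zero, norm_zero]
            exact Real.zero_rpow hp0.ne')]
          rw [Finset.sum_pair hσne]
          have e1 : P (k, σ k x) = w k := by
            have hx1 : G x (k, σ k x) = A k := if_pos rfl
            have hy1 : G y (k, σ k x) = 0 := if_neg (fun hc => hσne hc.symm)
            show ‖G x (k, σ k x) - G y (k, σ k x)‖ ^ p = w k
            rw [hx1, hy1, sub_zero, Real.norm_eq_abs, abs_of_nonneg (hA0 k), hApow]
          have e2 : P (k, σ k y) = w k := by
            have hx1 : G x (k, σ k y) = 0 := if_neg hσne
            have hy1 : G y (k, σ k y) = A k := if_pos rfl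
            show ‖G x (k, σ k y) - G y (k, σ k y)‖ ^ p = w k
            rw [hx1, hy1, zero_sub, norm_neg, Real.norm_eq_abs, abs_of_nonneg (hA0 k), hApow]
          rw [e1, e2, hw]
          ring
      set v : ℕ → ℝ := fun k => if k < m then 0 else u k - u (k + 1) with hv
      have hv0 : ∀ k, 0 ≤ v k := by
        intro k
        rw [hv]
        dsimp only
        split_ifs
        · exact le_refl 0
        · linarith [husucc k]
      have hvsum_range : ∀ n, ∑ i ∈ Finset.range n, v i = if n ≤ m then 0 else u m - u n := by
        intro n
        induction n with
        | zero => simp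
        | succ n ih =>
          rw [Finset.sum_range_succ, ih, hv]
          dsimp only
          by_cases h1 : n < m
          · rw [if_pos h1.le, if_pos h1, if_pos (Nat.succ_le_of_lt h1)]
            norm_num
          · by_cases h2 : n ≤ m
            · have hnm : n = m := le_antisymm h2 (not_lt.mp h1)
              rw [if_pos h2, if_neg h1, if_neg (by omega), zero_add, hnm]
            · rw [if_neg h2, if_neg h1, if_neg (by omega)]
              ring
      have hvsummable : Summable v := by
        apply summable_of_sum_range_le hv0 (c := u m)
        intro n
        rw [hvsum_range n]
        split_ifs
        · exact hu0 m
        · linarith [hu0 n]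
      have htendv : Tendsto (fun n => ∑ i ∈ Finset.range n, v i) atTop (nhds (u m)) := by
        apply Filter.Tendsto.congr' ?_ ?_
        · exact fun n => u m - u n
        · filter_upwards [eventually_gt_atTop m] with n hn
          rw [hvsum_range n, if_neg (by omega)]
        · simpa using tendsto_const_nhds.sub huT
      have htsum_v : (∑' k, v k) = u m :=
        tendsto_nhds_unique hvsummable.hasSum.tendsto_sum_nat htendv
      have hnorm : ‖g x - g y‖ ^ p = dist (f x) (f y) ^ p := by
        have h1 := lp.norm_rpow_eq_tsum hppos (g x - g y)
        rw [hpt] at h1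
        have h2 : ∀ j : ℕ, ‖(g x - g y : lp (fun _ : ℕ => ℝ) (ENNReal.ofReal p)) j‖ ^ p
            = P (Nat.pairEquiv.symm j) := by
          intro j
          have h3 : (g x - g y : lp (fun _ : ℕ => ℝ) (ENNReal.ofReal p)) j
              = G x (Nat.pairEquiv.symm j) - G y (Nat.pairEquiv.symm j) := by
            rw [lp.coeFn_sub]
            rfl
          rw [hP, h3]
        rw [h1]
        calc (∑' j, ‖(g x - g y : lp (fun _ : ℕ => ℝ) (ENNReal.ofReal p)) j‖ ^ p)
            = ∑' j, P (Nat.pairEquiv.symm j) := tsum_congr h2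
          _ = ∑' kn : ℕ × ℕ, P kn := Nat.pairEquiv.symm.tsum_eq P
          _ = ∑' (k) (n), P (k, n) := Summable.tsum_prod hPsum
          _ = ∑' k, v k := by
              apply tsum_congr
              intro k
              rw [hinner k, hv]
          _ = u m := htsum_v
          _ = dist (f x) (f y) ^ p := by rw [hu]; dsimp only; rw [hm]

      have h4 := congrArg (fun z : ℝ => z ^ p⁻¹) hnorm
      rw [Real.rpow_rpow_inv (norm_nonneg _) hp0.ne',
        Real.rpow_rpow_inv dist_nonneg hp0.ne'] at h4
      rw [dist_eq_norm]
      exact h4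
  exact ⟨g, r, hr, fun x y => by rw [hiso x y]; exact hf x y⟩
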